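/- Corollary 2.2 (uniqueness of MNW utilities): If A and A' are both MNW allocations with respect to the same profile (f_1,…,f_n) of piecewise constant value density functions on [0,1], then v_i(A_i) = v_i(A_i') for every agent i ∈ {1,…,n}. -/

import Mathlib

open MeasureTheory Set

noncomputable def cakeval (f : ℝ → ℝ) (S : Set ℝ) : ℝ := ∫ x in S, f x

def PiecewiseConstant (f : ℝ → ℝ) : Prop :=
  ∃ (m : ℕ) (a : Fin (m + 1) → ℝ) (c : Fin m → ℝ),
    a 0 = 0 ∧ a (Fin.last m) = 1 ∧ Monotone a ∧
    ∀ t : Fin m, ∀ x ∈ Set.Ico (a t.castSucc) (a t.succ), f x = c t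

def ValidDensity (f : ℝ → ℝ) : Prop :=
  PiecewiseConstant f ∧ (∀ x, 0 ≤ f x) ∧ 0 < cakeval f (Set.Icc 0 1)

def FinUnionIcc (S : Set ℝ) : Prop :=
  ∃ (k : ℕ) (a b : Fin k → ℝ), S = ⋃ j, Set.Icc (a j) (b j)

def IsAllocOn {n : ℕ} (C : Set ℝ) (A : Fin n → Set ℝ) : Prop :=
  (∀ i, A i ⊆ C) ∧ (∀ i, FinUnionIcc (A i)) ∧
    Pairwise fun i j => volume (A i ∩ A j) = 0

def IsAlloc {n : ℕ} (A : Fin n → Set ℝ) : Prop := IsAllocOn (Set.Icc 0 1) A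

def CompleteAlloc {n : ℕ} (A : Fin n → Set ℝ) : Prop := (⋃ i, A i) = Set.Icc (0 : ℝ) 1

noncomputable def nashProd {n : ℕ} (f : Fin n → ℝ → ℝ) (A : Fin n → Set ℝ) : ℝ :=
  ∏ i, cakeval (f i) (A i)

def IsMNWOn {n : ℕ} (C : Set ℝ) (f : Fin n → ℝ → ℝ) (A : Fin n → Set ℝ) : Prop :=
  IsAllocOn C A ∧ ∀ B : Fin n → Set ℝ, IsAllocOn C B → nashProd f B ≤ nashProd f A

def IsMNW {n : ℕ} (f : Fin n → ℝ → ℝ) (A : Fin n → Set ℝ) : Prop :=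
  IsMNWOn (Set.Icc 0 1) f A

def IsCompleteMNW {n : ℕ} (f : Fin n → ℝ → ℝ) (A : Fin n → Set ℝ) : Prop :=
  IsAlloc A ∧ CompleteAlloc A ∧
    ∀ B : Fin n → Set ℝ, IsAlloc B → CompleteAlloc B → nashProd f B ≤ nashProd f A


lemma vol_Icc_inter {a b c d : ℝ} (h : min b d ≤ max a c) :
    volume (Icc a b ∩ Icc c d) = 0 := by
  rw [Icc_inter_Icc, Real.volume_Icc]
  exact ENNReal.ofReal_eq_zero.2 (by linarith)

lemma finUnionIcc_measurable {S : Set ℝ} (h : FinUnionIcc S) :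
    MeasurableSet S := by
  obtain ⟨k, a, b, rfl⟩ := h
  exact MeasurableSet.iUnion fun j => measurableSet_Icc

lemma aeeq_Ioo_of_between {u v : ℝ} {S : Set ℝ} (h1 : Ioo u v ⊆ S) (h2 : S ⊆ Icc u v) :
    S =ᵐ[volume] Ioo u v := by
  have hsub : S \ Ioo u v ⊆ {u, v} := by
    intro x hx
    rcases hx with ⟨hxS, hxI⟩
    have hm := h2 hxS
    simp only [mem_Ioo, not_and_or, not_lt] at hxI
    rcases hxI with h | h
    · exact Or.inl (le_antisymm h hm.1)
    · exact Or.inr (le_antisymm hm.2 h)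
  have hv : volume (S \ Ioo u v) = 0 :=
    measure_mono_null hsub ((Set.toFinite _).measure_zero volume)
  refine (MeasureTheory.ae_eq_set.2 ⟨hv, ?_⟩)
  rw [diff_eq_empty.2 h1]; simp

lemma setIntegral_Ioo_const {u v : ℝ} {f : ℝ → ℝ} {c : ℝ} (huv : u ≤ v)
    (hf : ∀ x ∈ Ioo u v, f x = c) : ∫ x in Ioo u v, f x = c * (v - u) := by
  rw [setIntegral_congr_fun measurableSet_Ioo hf, setIntegral_const, Real.volume_real_Ioo_of_le huv,
    smul_eq_mul, mul_comm]

lemma covering {m : ℕ} (q : Fin (m+1) → ℝ) (x : ℝ)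
    (h0 : q 0 ≤ x) (h1 : x < q (Fin.last m)) :
    ∃ t : Fin m, q t.castSucc ≤ x ∧ x < q t.succ := by
  classical
  set T : Finset (Fin (m+1)) := Finset.univ.filter (fun t => q t ≤ x) with hT
  have h0T : (0 : Fin (m+1)) ∈ T := by simp [hT, h0]
  set t := T.max' ⟨0, h0T⟩ with ht
  have htT : t ∈ T := T.max'_mem _
  have hqt : q t ≤ x := by simpa [hT] using htT
  have hne : t ≠ Fin.last m := by
    intro h; rw [h] at hqt; linarith
  obtain ⟨u, hu⟩ : ∃ u : Fin m, u.castSucc = t := (Fin.exists_castSucc_eq).2 hne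
  refine ⟨u, by rw [hu]; exact hqt, ?_⟩
  by_contra hc
  push_neg at hc
  have : u.succ ∈ T := by simp [hT, hc]
  have := T.le_max' _ this
  rw [← ht, ← hu] at this
  exact absurd (lt_of_lt_of_le (Fin.castSucc_lt_succ (i := u)) this) (lt_irrefl _)

lemma grid_exists (P : Finset ℝ) (h0 : (0:ℝ) ∈ P) (h1 : (1:ℝ) ∈ P)
    (hsub : ∀ x ∈ P, x ∈ Icc (0:ℝ) 1) :
    ∃ (N : ℕ) (p : Fin (N+1) → ℝ), StrictMono p ∧ p 0 = 0 ∧ p (Fin.last N) = 1 ∧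
      (∀ j, p j ∈ P) ∧
      (∀ x ∈ P, ∀ j : Fin N, ¬(p j.castSucc < x ∧ x < p j.succ)) := by
  classical
  have hcard : 1 ≤ P.card := Finset.card_pos.2 ⟨0, h0⟩
  obtain ⟨N, hN⟩ : ∃ N, P.card = N + 1 := ⟨P.card - 1, by omega⟩
  set e := P.orderIsoOfFin hN with he
  set p : Fin (N+1) → ℝ := fun j => (e j : ℝ) with hp
  have hmono : StrictMono p := fun a b hab => by
    simpa [hp] using (e.strictMono hab)
  have hmem : ∀ j, p j ∈ P := fun j => (e j).2
  have hsurj : ∀ x ∈ P, ∃ j, p j = x := by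
    intro x hx
    obtain ⟨j, hj⟩ := e.surjective ⟨x, hx⟩
    exact ⟨j, by simp [hp, hj]⟩
  have hp0 : p 0 = 0 := by
    obtain ⟨j, hj⟩ := hsurj 0 h0
    have h3 : p 0 ≤ p j := hmono.monotone (Fin.zero_le j)
    have h2 : (0:ℝ) ≤ p 0 := (hsub _ (hmem 0)).1
    rw [hj] at h3
    linarith
  have hpl : p (Fin.last N) = 1 := by
    obtain ⟨j, hj⟩ := hsurj 1 h1
    have h3 : p j ≤ p (Fin.last N) := hmono.monotone (Fin.le_last j)
    have h2 : p (Fin.last N) ≤ 1 := (hsub _ (hmem _)).2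
    rw [hj] at h3
    linarith
  refine ⟨N, p, hmono, hp0, hpl, hmem, ?_⟩
  rintro x hx j ⟨hlt1, hlt2⟩
  obtain ⟨m, hm⟩ := hsurj x hx
  rw [← hm] at hlt1 hlt2
  have l1 := hmono.lt_iff_lt.1 hlt1
  have l2 := hmono.lt_iff_lt.1 hlt2
  simp [Fin.lt_def] at l1 l2
  omega

lemma cakeval_iUnion {ι : Type} [Fintype ι] {f : ℝ → ℝ} (S : ι → Set ℝ)
    (hm : ∀ j, NullMeasurableSet (S j) volume)
    (hd : Pairwise fun j j' => volume (S j ∩ S j') = 0)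
    (hi : ∀ j, IntegrableOn f (S j)) :
    cakeval f (⋃ j, S j) = ∑ j, cakeval f (S j) := by
  have h := integral_iUnion_ae (f := f) (μ := volume) hm (fun j j' h => hd h)
    (integrableOn_finite_iUnion.2 hi)
  rw [cakeval, h, tsum_fintype]
  rfl

lemma finUnionIcc_of_fintype {ι : Type} [Fintype ι] (S : ι → Set ℝ)
    (h : ∀ x, ∃ a b, S x = Icc a b) : FinUnionIcc (⋃ x, S x) := by
  classical
  choose a b hab using h
  refine ⟨Fintype.card ι, a ∘ (Fintype.equivFin ι).symm, b ∘ (Fintype.equivFin ι).symm, ?_⟩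
  rw [show (⋃ x, S x) = ⋃ x, Icc (a x) (b x) from iUnion_congr hab]
  exact ((Fintype.equivFin ι).symm.surjective.iUnion_comp
    (g := fun x => Icc (a x) (b x))).symm

lemma amgm_le {a b : ℝ} (ha : 0 ≤ a) (hb : 0 ≤ b) : Real.sqrt (a*b) ≤ (a+b)/2 := by
  rw [Real.sqrt_mul ha]
  nlinarith [sq_nonneg (Real.sqrt a - Real.sqrt b), Real.sq_sqrt ha, Real.sq_sqrt hb,
    Real.sqrt_nonneg a, Real.sqrt_nonneg b]

lemma amgm_lt {a b : ℝ} (ha : 0 < a) (hb : 0 < b) (hne : a ≠ b) :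
    Real.sqrt (a*b) < (a+b)/2 := by
  have hs : Real.sqrt a ≠ Real.sqrt b := by
    intro h
    exact hne (by rw [← Real.sq_sqrt ha.le, ← Real.sq_sqrt hb.le, h])
  have h2 : 0 < (Real.sqrt a - Real.sqrt b)^2 := by
    have := sub_ne_zero.2 hs
    positivity
  rw [Real.sqrt_mul ha.le]
  nlinarith [Real.sq_sqrt ha.le, Real.sq_sqrt hb.le, Real.sqrt_nonneg a, Real.sqrt_nonneg b]


set_option maxHeartbeats 2000000 in
lemma mnw_construction (n : ℕ) (hn : 0 < n) (f : Fin n → ℝ → ℝ)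
    (hf : ∀ i, ValidDensity (f i))
    (A A' : Fin n → Set ℝ) (hA : IsAlloc A) (hA' : IsAlloc A') :
    ∃ B W : Fin n → Set ℝ, IsAlloc B ∧ IsAlloc W ∧
      (∀ i, cakeval (f i) (B i) = (cakeval (f i) (A i) + cakeval (f i) (A' i)) / 2) ∧
      (∀ i, 0 < cakeval (f i) (W i)) := by
  classical
  obtain ⟨hAsub, hAfin, hAdisj⟩ := hA
  obtain ⟨hA'sub, hA'fin, hA'disj⟩ := hA'
  choose kA αA βA hArep using hAfin
  choose kA' αA' βA' hA'rep using hA'fin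
  choose m a c ha0 hal hamono hstep using fun i => (hf i).1
  -- the refinement grid
  set clamp : ℝ → ℝ := fun x => max 0 (min x 1) with hclamp
  have hclampmem : ∀ x, clamp x ∈ Icc (0:ℝ) 1 := fun x =>
    ⟨le_max_left _ _, max_le (by norm_num) (min_le_right _ _)⟩
  have hclampid : ∀ x, x ∈ Icc (0:ℝ) 1 → clamp x = x := by
    rintro x ⟨h1, h2⟩
    simp [hclamp, min_eq_left h2, max_eq_right h1]
  set P : Finset ℝ := insert 0 (insert 1 (
      (Finset.univ.biUnion fun i : Fin n =>
        Finset.image (fun l => clamp (αA i l)) Finset.univ ∪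
        Finset.image (fun l => clamp (βA i l)) Finset.univ) ∪
      (Finset.univ.biUnion fun i : Fin n =>
        Finset.image (fun l => clamp (αA' i l)) Finset.univ ∪
        Finset.image (fun l => clamp (βA' i l)) Finset.univ) ∪
      (Finset.univ.biUnion fun i : Fin n =>
        Finset.image (fun t => a i t) Finset.univ))) with hP
  have haP : ∀ i t, a i t ∈ P := by
    intro i t
    simp only [hP, Finset.mem_insert, Finset.mem_union, Finset.mem_biUnion, Finset.mem_image,
      Finset.mem_univ, true_and]
    exact Or.inr (Or.inr (Or.inr ⟨i, t, rfl⟩))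
  have hamem : ∀ i t, a i t ∈ Icc (0:ℝ) 1 := by
    intro i t
    constructor
    · rw [← ha0 i]; exact hamono i (Fin.zero_le t)
    · rw [← hal i]; exact hamono i (Fin.le_last t)
  have hPsub : ∀ x ∈ P, x ∈ Icc (0:ℝ) 1 := by
    intro x hx
    simp only [hP, Finset.mem_insert, Finset.mem_union, Finset.mem_biUnion, Finset.mem_image,
      Finset.mem_univ, true_and] at hx
    obtain rfl | rfl | hx := hx
    · exact ⟨le_refl _, by norm_num⟩
    · exact ⟨by norm_num, le_refl _⟩
    obtain (h | h) | h := hx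
    · obtain ⟨i, (⟨l, rfl⟩ | ⟨l, rfl⟩)⟩ := h <;> exact hclampmem _
    · obtain ⟨i, (⟨l, rfl⟩ | ⟨l, rfl⟩)⟩ := h <;> exact hclampmem _
    · obtain ⟨i, t, rfl⟩ := h
      exact hamem i t
  have hendA : ∀ i l, αA i l ≤ βA i l → αA i l ∈ P ∧ βA i l ∈ P := by
    intro i l hle
    have hsub2 : Icc (αA i l) (βA i l) ⊆ Icc (0:ℝ) 1 := by
      refine subset_trans ?_ (hAsub i)
      rw [hArep i]; exact subset_iUnion (fun l => Icc (αA i l) (βA i l)) l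
    have h1 : αA i l ∈ Icc (0:ℝ) 1 := hsub2 ⟨le_refl _, hle⟩
    have h2 : βA i l ∈ Icc (0:ℝ) 1 := hsub2 ⟨hle, le_refl _⟩
    constructor
    · rw [← hclampid _ h1]
      simp only [hP, Finset.mem_insert, Finset.mem_union, Finset.mem_biUnion, Finset.mem_image,
        Finset.mem_univ, true_and]
      exact Or.inr (Or.inr (Or.inl (Or.inl ⟨i, Or.inl ⟨l, rfl⟩⟩)))
    · rw [← hclampid _ h2]
      simp only [hP, Finset.mem_insert, Finset.mem_union, Finset.mem_biUnion, Finset.mem_image,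
        Finset.mem_univ, true_and]
      exact Or.inr (Or.inr (Or.inl (Or.inl ⟨i, Or.inr ⟨l, rfl⟩⟩)))
  have hendA' : ∀ i l, αA' i l ≤ βA' i l → αA' i l ∈ P ∧ βA' i l ∈ P := by
    intro i l hle
    have hsub2 : Icc (αA' i l) (βA' i l) ⊆ Icc (0:ℝ) 1 := by
      refine subset_trans ?_ (hA'sub i)
      rw [hA'rep i]; exact subset_iUnion (fun l => Icc (αA' i l) (βA' i l)) l
    have h1 : αA' i l ∈ Icc (0:ℝ) 1 := hsub2 ⟨le_refl _, hle⟩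
    have h2 : βA' i l ∈ Icc (0:ℝ) 1 := hsub2 ⟨hle, le_refl _⟩
    constructor
    · rw [← hclampid _ h1]
      simp only [hP, Finset.mem_insert, Finset.mem_union, Finset.mem_biUnion, Finset.mem_image,
        Finset.mem_univ, true_and]
      exact Or.inr (Or.inr (Or.inl (Or.inr ⟨i, Or.inl ⟨l, rfl⟩⟩)))
    · rw [← hclampid _ h2]
      simp only [hP, Finset.mem_insert, Finset.mem_union, Finset.mem_biUnion, Finset.mem_image,
        Finset.mem_univ, true_and]
      exact Or.inr (Or.inr (Or.inl (Or.inr ⟨i, Or.inr ⟨l, rfl⟩⟩)))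
  obtain ⟨N, p, hpmono, hp0, hpl, hpmem, hadj⟩ :=
    grid_exists P (by simp [hP]) (by simp [hP]) hPsub
  set u : Fin N → ℝ := fun j => p j.castSucc with hu
  set v : Fin N → ℝ := fun j => p j.succ with hv
  have hlen : ∀ j, 0 < v j - u j := fun j =>
    sub_pos.2 (hpmono (Fin.castSucc_lt_succ (i := j)))
  have huv : ∀ j, u j ≤ v j := fun j => by linarith [hlen j]
  have hu01 : ∀ j, u j ∈ Icc (0:ℝ) 1 := fun j => hPsub _ (hpmem _)
  have hv01 : ∀ j, v j ∈ Icc (0:ℝ) 1 := fun j => hPsub _ (hpmem _)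
  have hcell : ∀ j, Icc (u j) (v j) ⊆ Icc (0:ℝ) 1 :=
    fun j => Icc_subset_Icc (hu01 j).1 (hv01 j).2
  have hNpos : 0 < N := by
    rcases Nat.eq_zero_or_pos N with h | h
    · exfalso
      subst h
      rw [show Fin.last 0 = 0 from rfl, hp0] at hpl
      norm_num at hpl
    · exact h
  have hcover : Icc (0:ℝ) 1 ⊆ ⋃ j, Icc (u j) (v j) := by
    intro x hx
    by_cases hx1 : x < 1
    · obtain ⟨t, h1, h2⟩ := covering p x (by rw [hp0]; exact hx.1) (by rw [hpl]; exact hx1)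
      exact mem_iUnion.2 ⟨t, h1, h2.le⟩
    · have hx1 : x = 1 := le_antisymm hx.2 (not_lt.1 hx1)
      set jl : Fin N := ⟨N-1, by omega⟩ with hjl
      have hsucc : jl.succ = Fin.last N := by
        ext; simp [hjl]; omega
      have hvjl : v jl = 1 := by
        simp only [hv]
        rw [hsucc, hpl]
      refine mem_iUnion.2 ⟨jl, ⟨?_, ?_⟩⟩
      · rw [hx1]; exact (hu01 jl).2
      · exact le_of_eq (by rw [hx1, hvjl])
  -- constancy of each density on each cell
  have hconst : ∀ i j, ∃ cval, ∀ x ∈ Ioo (u j) (v j), f i x = cval := by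
    intro i j
    have hux : u j < 1 := lt_of_lt_of_le (by linarith [hlen j]) (hv01 j).2
    obtain ⟨t, h1, h2⟩ := covering (a i) (u j) (by rw [ha0 i]; exact (hu01 j).1)
      (by rw [hal i]; exact hux)
    have hadj2 := hadj (a i t.succ) (haP i t.succ) j
    have hvle : v j ≤ a i t.succ := by
      by_contra hc
      push_neg at hc
      exact hadj2 ⟨h2, hc⟩
    refine ⟨c i t, fun x hx => hstep i t x ⟨le_trans h1 hx.1.le, lt_of_lt_of_le hx.2 hvle⟩⟩
  choose cc hcc using hconst
  -- ownership dichotomy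
  have hdich : ∀ (S : Set ℝ) (kk : ℕ) (α β : Fin kk → ℝ), S ⊆ Icc 0 1 →
      S = (⋃ l, Icc (α l) (β l)) → (∀ l, α l ≤ β l → α l ∈ P ∧ β l ∈ P) →
      ∀ j, Ioo (u j) (v j) ⊆ S ∨ S ∩ Ioo (u j) (v j) = ∅ := by
    intro S kk α β hS hrep hend j
    by_cases hne : (S ∩ Ioo (u j) (v j)).Nonempty
    · left
      obtain ⟨x, hxS, hxI⟩ := hne
      have : x ∈ ⋃ l, Icc (α l) (β l) := by rw [← hrep]; exact hxS
      obtain ⟨l, hl⟩ := mem_iUnion.1 this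
      have hle : α l ≤ β l := le_trans hl.1 hl.2
      obtain ⟨hαP, hβP⟩ := hend l hle
      have hα : α l ≤ u j := by
        by_contra hc
        push_neg at hc
        exact hadj (α l) hαP j ⟨hc, lt_of_le_of_lt hl.1 hxI.2⟩
      have hβ : v j ≤ β l := by
        by_contra hc
        push_neg at hc
        exact hadj (β l) hβP j ⟨lt_of_lt_of_le hxI.1 hl.2, hc⟩
      intro y hy
      rw [hrep]
      exact mem_iUnion.2 ⟨l, le_trans hα hy.1.le, le_trans hy.2.le hβ⟩
    · right
      exact not_nonempty_iff_eq_empty.1 hne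
  have hdichA : ∀ i j, Ioo (u j) (v j) ⊆ A i ∨ A i ∩ Ioo (u j) (v j) = ∅ :=
    fun i => hdich (A i) (kA i) (αA i) (βA i) (hAsub i) (hArep i) (hendA i)
  have hdichA' : ∀ i j, Ioo (u j) (v j) ⊆ A' i ∨ A' i ∩ Ioo (u j) (v j) = ∅ :=
    fun i => hdich (A' i) (kA' i) (αA' i) (βA' i) (hA'sub i) (hA'rep i) (hendA' i)
  -- integrability
  have hIntCell : ∀ i j, IntegrableOn (f i) (Icc (u j) (v j)) := by
    intro i j
    have h1 : IntegrableOn (f i) (Ioo (u j) (v j)) := by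
      refine ((integrableOn_const_iff (C := cc i j)).2 (Or.inr ?_)).congr_fun
        (fun x hx => (hcc i j x hx).symm) measurableSet_Ioo
      rw [Real.volume_Ioo]; exact ENNReal.ofReal_lt_top
    exact h1.congr_set_ae Ioo_ae_eq_Icc.symm
  have hInt01 : ∀ i, IntegrableOn (f i) (Icc 0 1) := fun i =>
    (integrableOn_finite_iUnion.2 fun j => hIntCell i j).mono_set hcover
  have hIntS : ∀ i (S : Set ℝ), S ⊆ Icc 0 1 → IntegrableOn (f i) S :=
    fun i S hS => (hInt01 i).mono_set hS
  -- cell intersections are null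
  have hcellnull : ∀ j j' : Fin N, j ≠ j' →
      volume (Icc (u j) (v j) ∩ Icc (u j') (v j')) = 0 := by
    intro j j' hne
    apply vol_Icc_inter
    rcases lt_or_gt_of_ne hne with h | h
    · have : v j ≤ u j' := hpmono.monotone (by
        simp [Fin.le_def]
        omega)
      exact le_trans (min_le_left _ _) (le_trans this (le_max_right _ _))
    · have : v j' ≤ u j := hpmono.monotone (by
        simp [Fin.le_def]
        omega)
      exact le_trans (min_le_right _ _) (le_trans this (le_max_left _ _))
  -- value of a subdivided set
  have hval : ∀ i (S : Set ℝ), S ⊆ Icc 0 1 → MeasurableSet S →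
      (∀ j, Ioo (u j) (v j) ⊆ S ∨ S ∩ Ioo (u j) (v j) = ∅) →
      cakeval (f i) S = ∑ j, (if Ioo (u j) (v j) ⊆ S then cc i j * (v j - u j) else 0) := by
    intro i S hS hSm hSd
    have hdecomp : S = ⋃ j, S ∩ Icc (u j) (v j) := by
      rw [← inter_iUnion]
      exact (inter_eq_left.2 (hS.trans hcover)).symm
    rw [show cakeval (f i) S = cakeval (f i) (⋃ j, S ∩ Icc (u j) (v j)) from by rw [← hdecomp]]
    rw [cakeval_iUnion _ (fun j => (hSm.inter measurableSet_Icc).nullMeasurableSet)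
      (fun j j' hne => measure_mono_null
        (inter_subset_inter inter_subset_right inter_subset_right) (hcellnull j j' hne))
      (fun j => hIntS i _ (inter_subset_right.trans (hcell j)))]
    refine Finset.sum_congr rfl fun j _ => ?_
    by_cases hj : Ioo (u j) (v j) ⊆ S
    · rw [if_pos hj]
      have h1 : Ioo (u j) (v j) ⊆ S ∩ Icc (u j) (v j) :=
        subset_inter hj Ioo_subset_Icc_self
      have h2 := aeeq_Ioo_of_between h1 inter_subset_right
      rw [cakeval, setIntegral_congr_set h2, setIntegral_Ioo_const (huv j) (hcc i j)]
    · rw [if_neg hj]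
      rcases hSd j with h | h
      · exact absurd h hj
      · have hz : S ∩ Icc (u j) (v j) ⊆ ({u j, v j} : Set ℝ) := by
          rintro x ⟨hxS, hxI⟩
          by_cases hxo : x ∈ Ioo (u j) (v j)
          · exact absurd (h ▸ mem_inter hxS hxo) (notMem_empty x)
          · simp only [mem_Ioo, not_and_or, not_lt] at hxo
            rcases hxo with h' | h'
            · exact Or.inl (le_antisymm h' hxI.1)
            · exact Or.inr (le_antisymm hxI.2 h')
        have hz2 : volume (S ∩ Icc (u j) (v j)) = 0 :=
          measure_mono_null hz ((Set.toFinite _).measure_zero _)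
        rw [cakeval, Measure.restrict_eq_zero.2 hz2, integral_zero_measure]
  -- pieces
  set π : Fin N → ℕ → ℕ → Set ℝ := fun j s K =>
    Icc (u j + s * (v j - u j) / K) (u j + (s+1) * (v j - u j) / K) with hπ
  have hπbounds : ∀ (j : Fin N) (s K : ℕ), s + 1 ≤ K →
      u j ≤ u j + s * (v j - u j) / K ∧ u j + (s+1) * (v j - u j) / K ≤ v j ∧
      u j + s * (v j - u j) / K ≤ u j + (s+1) * (v j - u j) / K := by
    intro j s K hsK
    have hK : (0:ℝ) < K := by
      have : 0 < K := by omega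
      exact_mod_cast this
    have hl := hlen j
    have hs1 : ((s:ℝ) + 1) ≤ K := by exact_mod_cast hsK
    have hfst : u j ≤ u j + (s:ℝ) * (v j - u j) / K := by
      have h0 : 0 ≤ (s:ℝ) * (v j - u j) / K := by positivity
      linarith
    refine ⟨hfst, ?_, ?_⟩
    · have h5 : ((s:ℝ)+1) * (v j - u j) / K ≤ (v j - u j) := by
        rw [div_le_iff₀ hK]
        nlinarith
      linarith
    · have : (s:ℝ) * (v j - u j) / K ≤ ((s:ℝ)+1) * (v j - u j) / K := by
        apply div_le_div_of_nonneg_right ?_ hK.le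
        nlinarith
      push_cast
      linarith
  have hπsub : ∀ (j : Fin N) (s K : ℕ), s + 1 ≤ K → π j s K ⊆ Icc (u j) (v j) := by
    intro j s K hsK
    obtain ⟨h1, h2, _⟩ := hπbounds j s K hsK
    exact Icc_subset_Icc h1 (by push_cast at h2 ⊢; linarith)
  have hπval : ∀ i (j : Fin N) (s K : ℕ), s + 1 ≤ K →
      cakeval (f i) (π j s K) = cc i j * ((v j - u j) / K) := by
    intro i j s K hsK
    obtain ⟨h1, h2, h3⟩ := hπbounds j s K hsK
    have hIoo : Ioo (u j + s * (v j - u j) / K) (u j + (s+1) * (v j - u j) / K) ⊆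
        Ioo (u j) (v j) := Ioo_subset_Ioo h1 h2
    rw [cakeval, hπ, setIntegral_congr_set Ioo_ae_eq_Icc.symm,
      setIntegral_Ioo_const h3 (fun x hx => hcc i j x (hIoo hx))]
    congr 1
    have hK : (K:ℝ) ≠ 0 := by
      have : 0 < K := by omega
      positivity
    field_simp
    ring
  have hdivle : ∀ (j : Fin N) (K : ℕ), 0 < K → ∀ (x y : ℕ), x ≤ y →
      u j + (x:ℝ) * (v j - u j) / K ≤ u j + (y:ℝ) * (v j - u j) / K := by
    intro j K hK x y hxy
    have hK' : (0:ℝ) < K := by exact_mod_cast hK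
    have h1 : (x:ℝ) ≤ y := by exact_mod_cast hxy
    have h2 := (hlen j).le
    have h3 : (x:ℝ) * (v j - u j) ≤ (y:ℝ) * (v j - u j) := by nlinarith
    have h4 : (x:ℝ) * (v j - u j) / K ≤ (y:ℝ) * (v j - u j) / K :=
      div_le_div_of_nonneg_right h3 hK'.le
    linarith
  have hπnull : ∀ (j j' : Fin N) (s s' K : ℕ), (j ≠ j' ∨ s ≠ s') →
      s + 1 ≤ K → s' + 1 ≤ K → volume (π j s K ∩ π j' s' K) = 0 := by
    intro j j' s s' K hor hsK hs'K
    have hK : 0 < K := by omega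
    apply vol_Icc_inter
    by_cases hjj : j = j'
    · subst hjj
      have hss : s ≠ s' := by tauto
      rcases hss.lt_or_gt with h | h
      · have hb : u j + ((s:ℝ)+1) * (v j - u j) / K ≤ u j + (s':ℝ) * (v j - u j) / K := by
          have := hdivle j K hK (s+1) s' (by omega)
          push_cast at this
          linarith
        exact le_trans (min_le_left _ _) (le_trans hb (le_max_right _ _))
      · have hb : u j + ((s':ℝ)+1) * (v j - u j) / K ≤ u j + (s:ℝ) * (v j - u j) / K := by
          have := hdivle j K hK (s'+1) s (by omega)
          push_cast at this
          linarith
        exact le_trans (min_le_right _ _) (le_trans hb (le_max_left _ _))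
    · rcases (Ne.lt_or_gt hjj) with h | h
      · have h1 : u j + ((s:ℝ)+1) * (v j - u j) / K ≤ v j := (hπbounds j s K hsK).2.1
        have h2 : u j' ≤ u j' + (s':ℝ) * (v j' - u j') / K := (hπbounds j' s' K hs'K).1
        have h3 : v j ≤ u j' := hpmono.monotone (by
          simp [Fin.le_def]
          omega)
        exact le_trans (min_le_left _ _) (le_trans h1 (le_trans h3 (le_trans h2 (le_max_right _ _))))
      · have h1 : u j' + ((s':ℝ)+1) * (v j' - u j') / K ≤ v j' := (hπbounds j' s' K hs'K).2.1
        have h2 : u j ≤ u j + (s:ℝ) * (v j - u j) / K := (hπbounds j s K hsK).1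
        have h3 : v j' ≤ u j := hpmono.monotone (by
          simp [Fin.le_def]
          omega)
        exact le_trans (min_le_right _ _) (le_trans h1 (le_trans h3 (le_trans h2 (le_max_left _ _))))
  -- ownership
  set ownA : Fin n → Fin N → Prop := fun i j => Ioo (u j) (v j) ⊆ A i with hownA
  set ownA' : Fin n → Fin N → Prop := fun i j => Ioo (u j) (v j) ⊆ A' i with hownA'
  have hmeasA : ∀ i, MeasurableSet (A i) :=
    fun i => finUnionIcc_measurable ⟨kA i, αA i, βA i, hArep i⟩
  have hmeasA' : ∀ i, MeasurableSet (A' i) :=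
    fun i => finUnionIcc_measurable ⟨kA' i, αA' i, βA' i, hA'rep i⟩
  have huAval : ∀ i, cakeval (f i) (A i) = ∑ j, (if ownA i j then cc i j * (v j - u j) else 0) :=
    fun i => hval i (A i) (hAsub i) (hmeasA i) (hdichA i)
  have huA'val : ∀ i, cakeval (f i) (A' i) = ∑ j, (if ownA' i j then cc i j * (v j - u j) else 0) :=
    fun i => hval i (A' i) (hA'sub i) (hmeasA' i) (hdichA' i)
  have hfull : ∀ i, cakeval (f i) (Icc 0 1) = ∑ j, cc i j * (v j - u j) := by
    intro i
    rw [hval i (Icc 0 1) subset_rfl measurableSet_Icc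
      (fun j => Or.inl (Ioo_subset_Icc_self.trans (hcell j)))]
    exact Finset.sum_congr rfl fun j _ => if_pos (Ioo_subset_Icc_self.trans (hcell j))
  -- the positive allocation W
  set W : Fin n → Set ℝ := fun i => ⋃ j, π j i.val n with hW
  have hiK : ∀ i : Fin n, i.val + 1 ≤ n := fun i => i.2
  have hWalloc : IsAlloc W := by
    refine ⟨?_, ?_, ?_⟩
    · intro i
      exact iUnion_subset fun j => (hπsub j i.val n (hiK i)).trans (hcell j)
    · intro i
      refine ⟨N, fun j => u j + (i.val : ℝ) * (v j - u j) / n,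
        fun j => u j + ((i.val : ℝ)+1) * (v j - u j) / n, ?_⟩
      simp only [hW, hπ]
    · intro i i' hne
      have hsub2 : W i ∩ W i' ⊆ ⋃ j, ⋃ j', π j i.val n ∩ π j' i'.val n := by
        rintro x ⟨hx1, hx2⟩
        rw [hW] at hx1 hx2
        obtain ⟨j, hj⟩ := mem_iUnion.1 hx1
        obtain ⟨j', hj'⟩ := mem_iUnion.1 hx2
        exact mem_iUnion.2 ⟨j, mem_iUnion.2 ⟨j', hj, hj'⟩⟩
      refine measure_mono_null hsub2
        (measure_iUnion_null fun j => measure_iUnion_null fun j' => ?_)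
      exact hπnull j j' i.val i'.val n (Or.inr (fun h => hne (Fin.ext h))) (hiK i) (hiK i')
  have hWval : ∀ i, 0 < cakeval (f i) (W i) := by
    intro i
    have hv1 : cakeval (f i) (W i) = ∑ j, cc i j * ((v j - u j) / n) := by
      rw [hW]
      rw [cakeval_iUnion _ (fun j => measurableSet_Icc.nullMeasurableSet)
        (fun j j' hne => hπnull j j' i.val i.val n (Or.inl hne) (hiK i) (hiK i))
        (fun j => hIntS i _ ((hπsub j i.val n (hiK i)).trans (hcell j)))]
      exact Finset.sum_congr rfl fun j _ => hπval i j i.val n (hiK i)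
    have h2 : ∑ j, cc i j * ((v j - u j) / n) = (cakeval (f i) (Icc 0 1)) / n := by
      rw [hfull i, Finset.sum_div]
      exact Finset.sum_congr rfl fun j _ => (mul_div_assoc _ _ _).symm
    rw [hv1, h2]
    exact div_pos (hf i).2.2 (by exact_mod_cast hn)
  -- the midpoint allocation B
  set DD : Fin n → (Fin N ⊕ Fin N) → Set ℝ := fun i x =>
    Sum.elim (fun j => if ownA i j then π j 0 2 else (∅ : Set ℝ))
             (fun j => if ownA' i j then π j 1 2 else (∅ : Set ℝ)) x with hDD
  set B : Fin n → Set ℝ := fun i => ⋃ x, DD i x with hB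
  have hemptyIcc : (∅ : Set ℝ) = Icc 1 0 := (Icc_eq_empty (by norm_num)).symm
  have hπIcc : ∀ (j : Fin N) (s K : ℕ), ∃ a b, π j s K = Icc a b :=
    fun j s K => ⟨_, _, rfl⟩
  have hDIcc : ∀ i x, ∃ a b, DD i x = Icc a b := by
    intro i x
    rcases x with j | j
    · by_cases h : ownA i j
      · have hq : DD i (Sum.inl j) = π j 0 2 := by simp only [hDD, Sum.elim_inl, if_pos h]
        rw [hq]
        exact hπIcc j 0 2
      · exact ⟨1, 0, by simp only [hDD, Sum.elim_inl, if_neg h]; exact hemptyIcc⟩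
    · by_cases h : ownA' i j
      · have hq : DD i (Sum.inr j) = π j 1 2 := by simp only [hDD, Sum.elim_inr, if_pos h]
        rw [hq]
        exact hπIcc j 1 2
      · exact ⟨1, 0, by simp only [hDD, Sum.elim_inr, if_neg h]; exact hemptyIcc⟩
  have hDsub : ∀ i x, DD i x ⊆ Icc (0:ℝ) 1 := by
    intro i x
    rcases x with j | j
    · simp only [hDD, Sum.elim_inl]
      split_ifs
      · exact (hπsub j 0 2 (by omega)).trans (hcell j)
      · exact empty_subset _
    · simp only [hDD, Sum.elim_inr]
      split_ifs
      · exact (hπsub j 1 2 (by omega)).trans (hcell j)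
      · exact empty_subset _
  have hDmeas : ∀ i x, NullMeasurableSet (DD i x) volume := by
    intro i x
    obtain ⟨aa, bb, hab⟩ := hDIcc i x
    rw [hab]
    exact measurableSet_Icc.nullMeasurableSet
  have hDnullsame : ∀ i, Pairwise fun x y => volume (DD i x ∩ DD i y) = 0 := by
    intro i x y hxy
    rcases x with j | j <;> rcases y with j' | j' <;>
      simp only [hDD, Sum.elim_inl, Sum.elim_inr] <;> split_ifs
    · exact hπnull j j' 0 0 2 (Or.inl (fun h => hxy (by rw [h]))) (by omega) (by omega)
    all_goals try simp
    · exact hπnull j j' 0 1 2 (Or.inr (by omega)) (by omega) (by omega)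
    · exact hπnull j j' 1 0 2 (Or.inr (by omega)) (by omega) (by omega)
    · exact hπnull j j' 1 1 2 (Or.inl (fun h => hxy (by rw [h]))) (by omega) (by omega)
  have hDnulldiff : ∀ i i', i ≠ i' → ∀ x y, volume (DD i x ∩ DD i' y) = 0 := by
    intro i i' hne x y
    have hclash : ∀ j, ownA i j → ownA i' j → False := by
      intro j h1 h2
      have h0 : volume (Ioo (u j) (v j)) = 0 :=
        measure_mono_null (subset_inter h1 h2) (hAdisj hne)
      rw [Real.volume_Ioo, ENNReal.ofReal_eq_zero] at h0
      linarith [hlen j]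
    have hclash' : ∀ j, ownA' i j → ownA' i' j → False := by
      intro j h1 h2
      have h0 : volume (Ioo (u j) (v j)) = 0 :=
        measure_mono_null (subset_inter h1 h2) (hA'disj hne)
      rw [Real.volume_Ioo, ENNReal.ofReal_eq_zero] at h0
      linarith [hlen j]
    rcases x with j | j <;> rcases y with j' | j' <;>
      simp only [hDD, Sum.elim_inl, Sum.elim_inr] <;> split_ifs with h1 h2
    all_goals try simp
    · by_cases hjj : j = j'
      · subst hjj; exact absurd (hclash j h1 h2) (fun h => h)
      · exact hπnull j j' 0 0 2 (Or.inl hjj) (by omega) (by omega)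
    · exact hπnull j j' 0 1 2 (Or.inr (by omega)) (by omega) (by omega)
    · exact hπnull j j' 1 0 2 (Or.inr (by omega)) (by omega) (by omega)
    · by_cases hjj : j = j'
      · subst hjj; exact absurd (hclash' j h1 h2) (fun h => h)
      · exact hπnull j j' 1 1 2 (Or.inl hjj) (by omega) (by omega)
  have hBalloc : IsAlloc B := by
    refine ⟨?_, ?_, ?_⟩
    · intro i
      rw [hB]
      exact iUnion_subset (hDsub i)
    · intro i
      rw [hB]
      exact finUnionIcc_of_fintype _ (hDIcc i)
    · intro i i' hne
      have hsub2 : B i ∩ B i' ⊆ ⋃ x, ⋃ y, DD i x ∩ DD i' y := by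
        rintro z ⟨hz1, hz2⟩
        rw [hB] at hz1 hz2
        obtain ⟨x, hx⟩ := mem_iUnion.1 hz1
        obtain ⟨y, hy⟩ := mem_iUnion.1 hz2
        exact mem_iUnion.2 ⟨x, mem_iUnion.2 ⟨y, hx, hy⟩⟩
      exact measure_mono_null hsub2
        (measure_iUnion_null fun x => measure_iUnion_null fun y => hDnulldiff i i' hne x y)
  have hBval : ∀ i, cakeval (f i) (B i) =
      (cakeval (f i) (A i) + cakeval (f i) (A' i)) / 2 := by
    intro i
    have hstep1 : cakeval (f i) (B i) = ∑ x : Fin N ⊕ Fin N, cakeval (f i) (DD i x) := by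
      rw [hB]
      exact cakeval_iUnion _ (hDmeas i) (hDnullsame i)
        (fun x => hIntS i _ (hDsub i x))
    have hempty : cakeval (f i) (∅ : Set ℝ) = 0 := by
      rw [cakeval]
      simp
    rw [hstep1, Fintype.sum_sum_type]
    have hL : ∀ j, cakeval (f i) (DD i (Sum.inl j)) =
        (if ownA i j then cc i j * (v j - u j) else 0) / 2 := by
      intro j
      simp only [hDD, Sum.elim_inl]
      split_ifs with h
      · rw [hπval i j 0 2 (by omega)]
        push_cast
        ring
      · rw [hempty]; ring
    have hR : ∀ j, cakeval (f i) (DD i (Sum.inr j)) =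
        (if ownA' i j then cc i j * (v j - u j) else 0) / 2 := by
      intro j
      simp only [hDD, Sum.elim_inr]
      split_ifs with h
      · rw [hπval i j 1 2 (by omega)]
        push_cast
        ring
      · rw [hempty]; ring
    rw [Finset.sum_congr rfl (fun j _ => hL j), Finset.sum_congr rfl (fun j _ => hR j),
      huAval i, huA'val i, ← Finset.sum_div, ← Finset.sum_div]
    ring
  exact ⟨B, W, hBalloc, hWalloc, hBval, hWval⟩


set_option maxHeartbeats 1000000 in
/-- Corollary 2.2 (uniqueness of MNW utilities): if `A` and `A'` are both MNW
allocations with respect to the same profile, then every agent receives the same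
value in `A` and in `A'`. -/
theorem mnw_utilities_unique (n : ℕ) (f : Fin n → ℝ → ℝ)
    (hf : ∀ i, ValidDensity (f i))
    (A A' : Fin n → Set ℝ) (hA : IsMNW f A) (hA' : IsMNW f A') :
    ∀ i, cakeval (f i) (A i) = cakeval (f i) (A' i) := by
  intro i
  rcases Nat.eq_zero_or_pos n with hn | hn
  · exact absurd i.isLt (by omega)
  obtain ⟨B, W, hB, hW, hBval, hWval⟩ := mnw_construction n hn f hf A A' hA.1 hA'.1
  set uA : Fin n → ℝ := fun k => cakeval (f k) (A k) with huA
  set uA' : Fin n → ℝ := fun k => cakeval (f k) (A' k) with huA'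
  have hnonnegA : ∀ k, 0 ≤ uA k := fun k => integral_nonneg (fun x => (hf k).2.1 x)
  have hnonnegA' : ∀ k, 0 ≤ uA' k := fun k => integral_nonneg (fun x => (hf k).2.1 x)
  have hMeq : nashProd f A' = nashProd f A := le_antisymm (hA.2 A' hA'.1) (hA'.2 A hA.1)
  have hMpos : 0 < nashProd f A :=
    lt_of_lt_of_le (Finset.prod_pos fun k _ => hWval k) (hA.2 W hW)
  have hprodA : nashProd f A = ∏ k, uA k := rfl
  have hprodA' : nashProd f A' = ∏ k, uA' k := rfl
  have hposA : ∀ k, 0 < uA k := by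
    intro k
    rcases (hnonnegA k).lt_or_eq with h | h
    · exact h
    · exfalso
      have h0 : nashProd f A = 0 := by
        rw [hprodA]
        exact Finset.prod_eq_zero (Finset.mem_univ k) h.symm
      rw [h0] at hMpos
      exact lt_irrefl _ hMpos
  have hposA' : ∀ k, 0 < uA' k := by
    intro k
    rcases (hnonnegA' k).lt_or_eq with h | h
    · exact h
    · exfalso
      have h0 : nashProd f A' = 0 := by
        rw [hprodA']
        exact Finset.prod_eq_zero (Finset.mem_univ k) h.symm
      rw [hMeq] at h0
      rw [h0] at hMpos
      exact lt_irrefl _ hMpos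
  by_contra hne
  have hle : ∀ k, Real.sqrt (uA k * uA' k) ≤ (uA k + uA' k) / 2 :=
    fun k => amgm_le (hnonnegA k) (hnonnegA' k)
  have hlt : Real.sqrt (uA i * uA' i) < (uA i + uA' i) / 2 :=
    amgm_lt (hposA i) (hposA' i) hne
  have hX : (∏ k, Real.sqrt (uA k * uA' k)) = nashProd f A := by
    have h1 : (∏ k, Real.sqrt (uA k * uA' k)) ^ 2 = nashProd f A * nashProd f A' := by
      rw [← Finset.prod_pow,
        Finset.prod_congr rfl (fun k _ => Real.sq_sqrt (mul_nonneg (hnonnegA k) (hnonnegA' k))),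
        hprodA, hprodA', ← Finset.prod_mul_distrib]
    have h2 : 0 ≤ ∏ k, Real.sqrt (uA k * uA' k) :=
      Finset.prod_nonneg fun k _ => Real.sqrt_nonneg _
    have h3 : (∏ k, Real.sqrt (uA k * uA' k)) ^ 2 = (nashProd f A) ^ 2 := by
      rw [h1, hMeq, sq]
    calc (∏ k, Real.sqrt (uA k * uA' k))
        = Real.sqrt ((∏ k, Real.sqrt (uA k * uA' k)) ^ 2) := (Real.sqrt_sq h2).symm
      _ = Real.sqrt ((nashProd f A) ^ 2) := by rw [h3]
      _ = nashProd f A := Real.sqrt_sq hMpos.le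
  have hcontr : nashProd f A < nashProd f B := by
    rw [← hX]
    rw [show nashProd f B = ∏ k, (uA k + uA' k) / 2 from
      Finset.prod_congr rfl fun k _ => hBval k]
    exact Finset.prod_lt_prod
      (fun k _ => Real.sqrt_pos.2 (mul_pos (hposA k) (hposA' k)))
      (fun k _ => hle k) ⟨i, Finset.mem_univ i, hlt⟩
  exact absurd (hA.2 B hB) (not_le.2 hcontr)
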